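/- Let X be a topological space and x ∈ X. If f : λ → X is an injective transfinite sequence (λ an ordinal) converging to x such that x is not in the closure of any proper initial segment f[β] for β < λ, then the set N_x ∪ ran(f) is a spoke at x: x has a neighbourhood base in the subspace N_x ∪ ran(f) well-ordered by reverse inclusion. -/

import Mathlib

open Filter Topology Set

universe u v

/-- `x` has a neighbourhood base in the subspace `S` well-ordered by reverse inclusion. -/
def HasWONhdsBase {X : Type u} [TopologicalSpace X] (x : X) (S : Set X) : Prop :=
  ∃ (o : Ordinal.{u}) (B : ↥(Set.Iio o) → Set X),
    (∀ i, B i ⊆ S) ∧ (∀ i j, i ≤ j → B j ⊆ B i) ∧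
    (𝓝[S] x).HasBasis (fun _ => True) B

/-- `X` is radial at `x`. -/
def RadialAt (X : Type u) [TopologicalSpace X] (x : X) : Prop :=
  ∀ A : Set X, x ∈ closure A →
    ∃ (o : Ordinal.{u}) (f : ↥(Set.Iio o) → X), o ≠ 0 ∧
      (∀ i, f i ∈ A) ∧ Filter.Tendsto f Filter.atTop (𝓝 x)

theorem stmt2 {X : Type u} [TopologicalSpace X] (x : X) (lam : Ordinal.{u})
    (f : ↥(Set.Iio lam) → X) (hinj : Function.Injective f)
    (hconv : Filter.Tendsto f Filter.atTop (𝓝 x))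
    (hstrict : ∀ β : ↥(Set.Iio lam), x ∉ closure (f '' {α | α < β})) :
    x ∈ (𝓝 x).ker ∪ Set.range f ∧ HasWONhdsBase x ((𝓝 x).ker ∪ Set.range f) := by
  have hker : x ∈ (𝓝 x).ker := by
    rw [Filter.mem_ker]
    exact fun s hs => mem_of_mem_nhds hs
  have hkerU : ∀ U ∈ 𝓝 x, (𝓝 x).ker ⊆ U := fun U hU y hy => Filter.mem_ker.mp hy U hU
  refine ⟨Or.inl hker, ?_⟩
  set S := (𝓝 x).ker ∪ Set.range f with hS
  rcases eq_or_ne lam 0 with rfl | hlam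
  · -- empty sequence
    have hre : Set.range f = ∅ := by
      rw [Set.range_eq_empty_iff]
      exact ⟨fun a => absurd a.2 (show ¬ (a : Ordinal.{u}) < 0 from not_lt.mpr zero_le)⟩
    refine ⟨1, fun _ => (𝓝 x).ker, fun _ => Set.subset_union_left, fun _ _ _ => le_refl _, ?_⟩
    constructor
    intro s
    simp only [true_and]
    constructor
    · intro hs
      rcases mem_nhdsWithin.mp hs with ⟨U, hUo, hxU, hsub⟩
      refine ⟨⟨0, by simp⟩, fun y hy => hsub ⟨hkerU U (hUo.mem_nhds hxU) hy, Or.inl hy⟩⟩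
    · rintro ⟨i, hsub⟩
      have hSk : S = (𝓝 x).ker := by rw [hS, hre, Set.union_empty]
      exact Filter.mem_of_superset self_mem_nhdsWithin (hSk ▸ hsub)
  · have hne : Nonempty ↥(Set.Iio lam) :=
      ⟨⟨0, pos_iff_ne_zero.mpr hlam⟩⟩
    refine ⟨lam, fun β => (𝓝 x).ker ∪ f '' {α | β ≤ α}, ?_, ?_, ?_⟩
    · exact fun β => Set.union_subset_union_right _ (Set.image_subset_range f _)
    · exact fun i j hij =>
        Set.union_subset_union_right _ (Set.image_mono (fun α hα => le_trans hij hα))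
    · constructor
      intro s
      simp only [true_and]
      constructor
      · intro hs
        rcases mem_nhdsWithin.mp hs with ⟨U, hUo, hxU, hsub⟩
        have hU : U ∈ 𝓝 x := hUo.mem_nhds hxU
        obtain ⟨β, hβ⟩ := Filter.eventually_atTop.mp (hconv.eventually (eventually_mem_set.mpr hU))
        refine ⟨β, fun y hy => hsub ?_⟩
        rcases hy with hy | ⟨α, hα, rfl⟩
        · exact ⟨hkerU U hU hy, Or.inl hy⟩
        · exact ⟨hβ α hα, Or.inr ⟨α, rfl⟩⟩
      · rintro ⟨β, hsub⟩
        refine Filter.mem_of_superset (mem_nhdsWithin.mpr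
          ⟨(closure (f '' {α | α < β}))ᶜ, isClosed_closure.isOpen_compl, hstrict β, ?_⟩) hsub
        rintro y ⟨hyU, hyS⟩
        rcases hyS with hy | ⟨α, rfl⟩
        · exact Or.inl hy
        · rcases le_or_gt β α with h | h
          · exact Or.inr ⟨α, h, rfl⟩
          · exact absurd (subset_closure (show f α ∈ f '' {α | α < β} from ⟨α, h, rfl⟩)) hyU
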